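/- Let A and B be finite subsets of ℕ, let S ⊆ ℕ be an arbitrary subset (the indices of a fixed color), and let m ∈ ℕ with m ≤ min(|A|, |B|). Let A' be the set of the m smallest elements of A and B' the set of the m smallest elements of B (i.e., each set is truncated by repeatedly removing its largest element until it has size m). Then |A' \ (A' ∩ B' ∩ S)| ≤ max( |A \ (A ∩ B ∩ S)|, |B \ (A ∩ B ∩ S)| ). -/
import Mathlib


open scoped Classical

/-- truncation step of the removal process. Let `A', B'` consist of the `m`
smallest elements of the finite sets `A, B ⊆ ℕ` respectively (characterized by being
subsets of size `m` all of whose elements are smaller than every discarded element), and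
let `S ⊆ ℕ` be an arbitrary set (the indices of a fixed color). Then
`|A' \ (A' ∩ B' ∩ S)| ≤ max(|A \ (A ∩ B ∩ S)|, |B \ (A ∩ B ∩ S)|)`. -/
theorem truncation_disagreement_bound (A B A' B' : Finset ℕ) (S : Set ℕ) (m : ℕ)
    (hmA : m ≤ A.card) (hmB : m ≤ B.card)
    (hA'sub : A' ⊆ A) (hA'card : A'.card = m)
    (hA'min : ∀ a ∈ A', ∀ b ∈ A, b ∉ A' → a < b)
    (hB'sub : B' ⊆ B) (hB'card : B'.card = m)
    (hB'min : ∀ a ∈ B', ∀ b ∈ B, b ∉ B' → a < b) :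
    (A' \ ((A' ∩ B').filter fun x => x ∈ S)).card ≤
      max ((A \ ((A ∩ B).filter fun x => x ∈ S)).card)
        ((B \ ((A ∩ B).filter fun x => x ∈ S)).card) := by
  classical
  set G := (A ∩ B).filter (fun x => x ∈ S) with hG
  set F := (A' ∩ B').filter (fun x => x ∈ S) with hF
  have hFA' : F ⊆ A' := fun x hx => (Finset.mem_inter.1 (Finset.mem_filter.1 hx).1).1
  have hFG : F ⊆ G := by
    intro x hx
    simp only [hF, hG, Finset.mem_filter, Finset.mem_inter] at *
    exact ⟨⟨hA'sub hx.1.1, hB'sub hx.1.2⟩, hx.2⟩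
  have hGA : G ⊆ A := fun x hx => (Finset.mem_inter.1 (Finset.mem_filter.1 hx).1).1
  have hGB : G ⊆ B := fun x hx => (Finset.mem_inter.1 (Finset.mem_filter.1 hx).1).2
  have h1 : (A' \ F).card + F.card = A'.card := Finset.card_sdiff_add_card_eq_card hFA'
  have h2 : (G \ F).card + F.card = G.card := Finset.card_sdiff_add_card_eq_card hFG
  have h3 : (A \ G).card + G.card = A.card := Finset.card_sdiff_add_card_eq_card hGA
  have h4 : (B \ G).card + G.card = B.card := Finset.card_sdiff_add_card_eq_card hGB
  have h5 : (A \ A').card + A'.card = A.card := Finset.card_sdiff_add_card_eq_card hA'sub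
  have h6 : (B \ B').card + B'.card = B.card := Finset.card_sdiff_add_card_eq_card hB'sub
  -- key: G \ F ⊆ A \ A' or G \ F ⊆ B \ B'
  have key : (G \ F ⊆ A \ A') ∨ (G \ F ⊆ B \ B') := by
    by_cases hc : G \ F ⊆ B \ B'
    · exact Or.inr hc
    · left
      obtain ⟨x, hxGF, hxnB⟩ := Finset.not_subset.1 hc
      have hxG : x ∈ G := (Finset.mem_sdiff.1 hxGF).1
      have hxB' : x ∈ B' := by
        by_contra h
        exact hxnB (Finset.mem_sdiff.2 ⟨hGB hxG, h⟩)
      have hxS : x ∈ S := (Finset.mem_filter.1 hxG).2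
      have hxnA' : x ∉ A' := by
        intro h
        exact (Finset.mem_sdiff.1 hxGF).2
          (Finset.mem_filter.2 ⟨Finset.mem_inter.2 ⟨h, hxB'⟩, hxS⟩)
      intro y hyGF
      have hyG : y ∈ G := (Finset.mem_sdiff.1 hyGF).1
      have hyS : y ∈ S := (Finset.mem_filter.1 hyG).2
      refine Finset.mem_sdiff.2 ⟨hGA hyG, ?_⟩
      intro hyA'
      have hynB' : y ∉ B' := by
        intro h
        exact (Finset.mem_sdiff.1 hyGF).2
          (Finset.mem_filter.2 ⟨Finset.mem_inter.2 ⟨hyA', h⟩, hyS⟩)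
      have h1' : x < y := hB'min x hxB' y (hGB hyG) hynB'
      have h2' : y < x := hA'min y hyA' x (hGA hxG) hxnA'
      omega
  rcases key with hk | hk
  · have := Finset.card_le_card hk
    have hle : (A' \ F).card ≤ (A \ G).card := by omega
    exact le_trans hle (le_max_left _ _)
  · have := Finset.card_le_card hk
    have hle : (A' \ F).card ≤ (B \ G).card := by omega
    exact le_trans hle (le_max_right _ _)
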